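/- Let S be a simplicial poset with a sign convention and suppose for each q and each covering pair I <₁ J we have maps m_{I,J} : H_q(I) → H_q(J) (values of a would-be sheaf) such that the total map d¹ = ⊕ m_{I,J} squares to zero, i.e., m_{J',J} ∘ m_{I,J'} + m_{J'',J} ∘ m_{I,J''} = 0 for every square I <₁ J', J'' <₁ J. Define restriction maps along saturated chains by composing the signed maps [J:I]·m_{I,J}. Then the composite along any saturated chain from I to J is independent of the choice of chain, so this defines a cellular sheaf on S. -/

import Mathlib

/-- A finite poset `S` with a minimal element is *simplicial* (with rank function `rk`)
if every lower order ideal is a boolean lattice. -/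
def IsSimplicialPoset (S : Type*) [Fintype S] [PartialOrder S] [OrderBot S]
    (rk : S → ℕ) : Prop :=
  ∀ I : S, Nonempty ({J : S // J ≤ I} ≃o Finset (Fin (rk I)))

/-- The last element of `a :: c`. -/
def lastD {S : Type*} : List S → S → S
  | [], a => a
  | b :: l, _ => lastD l b

/-- A saturated chain: consecutive elements are covering pairs (rank increases by one). -/
def IsSatChain {S : Type*} [PartialOrder S] (rk : S → ℕ) (c : List S) : Prop :=
  c.Chain' (fun a b => a < b ∧ rk b = rk a + 1)

/-- The composite of the signed maps `[J:I] • m_{I,J}` along a saturated chain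
`a <₁ c₀ <₁ c₁ <₁ ⋯`. -/
def compAlong {k : Type*} [CommRing k] {S : Type*}
    (A : S → Type*) [∀ I, AddCommGroup (A I)] [∀ I, Module k (A I)]
    (ε : S → S → ℤ) (m : ∀ I J : S, A I →ₗ[k] A J) :
    (a : S) → (c : List S) → (A a →ₗ[k] A (lastD c a))
  | _, [] => LinearMap.id
  | a, b :: rest => (compAlong A ε m b rest).comp ((ε b a) • m a b)

section helpers
set_option linter.unusedSectionVars false
variable {S : Type*} [Fintype S] [PartialOrder S] [OrderBot S] {rk : S → ℕ}

lemma le_lastD : ∀ (c : List S) (a : S), IsSatChain rk (a :: c) → a ≤ lastD c a := by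
  intro c
  induction c with
  | nil => intro a _; exact le_refl a
  | cons b l ih =>
    intro a h
    simp only [IsSatChain, List.Chain', List.isChain_cons_cons] at h
    exact le_trans h.1.1.le (ih b h.2)

lemma rk_lastD : ∀ (c : List S) (a : S), IsSatChain rk (a :: c) →
    rk (lastD c a) = rk a + c.length := by
  intro c
  induction c with
  | nil => intro a _; simp [lastD]
  | cons b l ih =>
    intro a h
    simp only [IsSatChain, List.Chain', List.isChain_cons_cons] at h
    have := ih b h.2
    simp only [lastD, List.length_cons]
    omega

lemma rank_eq_card (hS : IsSimplicialPoset S rk) (J : S)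
    (e : {X : S // X ≤ J} ≃o Finset (Fin (rk J))) (X : S) (hX : X ≤ J) :
    rk X = (e ⟨X, hX⟩).card := by
  obtain ⟨f⟩ := hS X
  have g : {Y : S // Y ≤ X} ≃ {s // s ∈ (e ⟨X, hX⟩).powerset} :=
  { toFun := fun Y => ⟨e ⟨Y.1, Y.2.trans hX⟩, by
      rw [Finset.mem_powerset]
      exact e.monotone (show (⟨Y.1, Y.2.trans hX⟩ : {X : S // X ≤ J}) ≤ ⟨X, hX⟩ from Y.2)⟩
    invFun := fun s => ⟨(e.symm s.1).1, by
      have h1 : s.1 ≤ e ⟨X, hX⟩ := Finset.mem_powerset.mp s.2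
      have := e.symm.monotone h1
      rw [e.symm_apply_apply] at this
      exact this⟩
    left_inv := fun Y => Subtype.ext (by simp)
    right_inv := fun s => Subtype.ext (by simp) }
  have c1 : Nat.card {Y : S // Y ≤ X} = 2 ^ (e ⟨X, hX⟩).card := by
    rw [Nat.card_congr g, Nat.card_eq_fintype_card, Fintype.card_coe, Finset.card_powerset]
  have c2 : Nat.card {Y : S // Y ≤ X} = 2 ^ (rk X) := by
    rw [Nat.card_congr f.toEquiv, Nat.card_eq_fintype_card, Fintype.card_finset,
      Fintype.card_fin]
  exact Nat.pow_right_injective (le_refl 2) (c2.symm.trans c1)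

lemma rank_eq_card' (hS : IsSimplicialPoset S rk) (J : S)
    (e : {X : S // X ≤ J} ≃o Finset (Fin (rk J))) (X : {X : S // X ≤ J}) :
    rk X.1 = (e X).card :=
  rank_eq_card hS J e X.1 X.2

/-- existence of a saturated chain from `X` up to `J`. -/
lemma exists_satChain (hS : IsSimplicialPoset S rk) (J : S)
    (e : {X : S // X ≤ J} ≃o Finset (Fin (rk J))) :
    ∀ (n : ℕ) (X : S) (hX : X ≤ J), rk J = rk X + n →
    ∃ d : List S, IsSatChain rk (X :: d) ∧ lastD d X = J := by
  intro n
  induction n with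
  | zero =>
    intro X hX hr
    have hc1 := rank_eq_card hS J e X hX
    have hc2 := rank_eq_card hS J e J (le_refl J)
    have hsub : e ⟨X, hX⟩ ⊆ e ⟨J, le_refl J⟩ :=
      e.monotone (show (⟨X, hX⟩ : {X : S // X ≤ J}) ≤ ⟨J, le_refl J⟩ from hX)
    have : e ⟨X, hX⟩ = e ⟨J, le_refl J⟩ :=
      Finset.eq_of_subset_of_card_le hsub (by omega)
    have hXJ : X = J := congrArg Subtype.val (e.injective this)
    subst hXJ
    exact ⟨[], by simp [IsSatChain, List.Chain'], rfl⟩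
  | succ n ih =>
    intro X hX hr
    have hc1 := rank_eq_card hS J e X hX
    have hc2 := rank_eq_card hS J e J (le_refl J)
    have hsub : e ⟨X, hX⟩ ⊆ e ⟨J, le_refl J⟩ :=
      e.monotone (show (⟨X, hX⟩ : {X : S // X ≤ J}) ≤ ⟨J, le_refl J⟩ from hX)
    have hss : e ⟨X, hX⟩ ⊂ e ⟨J, le_refl J⟩ :=
      Finset.ssubset_iff_subset_ne.mpr ⟨hsub, by intro h; rw [h] at hc1; omega⟩
    obtain ⟨a, haJ, haX⟩ := Finset.exists_of_ssubset hss
    have hs'sub : insert a (e ⟨X, hX⟩) ⊆ e ⟨J, le_refl J⟩ := Finset.insert_subset haJ hsub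
    have hrk' : rk (e.symm (insert a (e ⟨X, hX⟩))).1 = rk X + 1 := by
      have h := rank_eq_card' hS J e (e.symm (insert a (e ⟨X, hX⟩)))
      rw [e.apply_symm_apply, Finset.card_insert_of_notMem haX] at h
      omega
    have hlt : X < (e.symm (insert a (e ⟨X, hX⟩))).1 := by
      have h1 : (⟨X, hX⟩ : {X : S // X ≤ J}) < e.symm (insert a (e ⟨X, hX⟩)) := by
        rw [← e.lt_iff_lt, e.apply_symm_apply]
        exact Finset.ssubset_insert haX
      exact h1
    obtain ⟨d, hd1, hd2⟩ := ih (e.symm (insert a (e ⟨X, hX⟩))).1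
      (e.symm (insert a (e ⟨X, hX⟩))).2 (by omega)
    refine ⟨(e.symm (insert a (e ⟨X, hX⟩))).1 :: d, ?_, hd2⟩
    simp only [IsSatChain, List.Chain', List.isChain_cons_cons] at hd1 ⊢
    exact ⟨⟨hlt, hrk'⟩, hd1⟩

/-- existence of the join `K` above two distinct covers of `I`. -/
lemma exists_join (hS : IsSimplicialPoset S rk) (J : S)
    (e : {X : S // X ≤ J} ≃o Finset (Fin (rk J)))
    (I J' J'' : S) (hne : J' ≠ J'')
    (h1 : I < J') (hr1 : rk J' = rk I + 1)
    (h2 : I < J'') (hr2 : rk J'' = rk I + 1)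
    (hJ1 : J' ≤ J) (hJ2 : J'' ≤ J) :
    ∃ K : S, J' < K ∧ J'' < K ∧ K ≤ J ∧ rk K = rk I + 2 := by
  have hIJ : I ≤ J := h1.le.trans hJ1
  have hcI := rank_eq_card hS J e I hIJ
  have hc1 := rank_eq_card hS J e J' hJ1
  have hc2 := rank_eq_card hS J e J'' hJ2
  have hsub1 : e ⟨I, hIJ⟩ ⊆ e ⟨J', hJ1⟩ :=
    e.monotone (show (⟨I, hIJ⟩ : {X : S // X ≤ J}) ≤ ⟨J', hJ1⟩ from h1.le)
  have hsub2 : e ⟨I, hIJ⟩ ⊆ e ⟨J'', hJ2⟩ :=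
    e.monotone (show (⟨I, hIJ⟩ : {X : S // X ≤ J}) ≤ ⟨J'', hJ2⟩ from h2.le)
  have hd1 : (e ⟨J', hJ1⟩ \ e ⟨I, hIJ⟩).card = 1 := by rw [Finset.card_sdiff_of_subset hsub1]; omega
  have hd2 : (e ⟨J'', hJ2⟩ \ e ⟨I, hIJ⟩).card = 1 := by rw [Finset.card_sdiff_of_subset hsub2]; omega
  obtain ⟨a, ha⟩ := Finset.card_eq_one.mp hd1
  obtain ⟨b, hb⟩ := Finset.card_eq_one.mp hd2
  have hs1eq : e ⟨J', hJ1⟩ = insert a (e ⟨I, hIJ⟩) := by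
    rw [Finset.insert_eq, Finset.union_comm, ← ha]
    exact (Finset.union_sdiff_of_subset hsub1).symm
  have hs2eq : e ⟨J'', hJ2⟩ = insert b (e ⟨I, hIJ⟩) := by
    rw [Finset.insert_eq, Finset.union_comm, ← hb]
    exact (Finset.union_sdiff_of_subset hsub2).symm
  have haI : a ∉ e ⟨I, hIJ⟩ := by
    have : a ∈ e ⟨J', hJ1⟩ \ e ⟨I, hIJ⟩ := ha ▸ Finset.mem_singleton_self a
    exact (Finset.mem_sdiff.mp this).2
  have hbI : b ∉ e ⟨I, hIJ⟩ := by
    have : b ∈ e ⟨J'', hJ2⟩ \ e ⟨I, hIJ⟩ := hb ▸ Finset.mem_singleton_self b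
    exact (Finset.mem_sdiff.mp this).2
  have hab : a ≠ b := by
    intro h
    apply hne
    have heq : e ⟨J', hJ1⟩ = e ⟨J'', hJ2⟩ := by rw [hs1eq, hs2eq, h]
    exact congrArg Subtype.val (e.injective heq)
  have hucard : (e ⟨J', hJ1⟩ ∪ e ⟨J'', hJ2⟩).card = (e ⟨I, hIJ⟩).card + 2 := by
    have hueq : e ⟨J', hJ1⟩ ∪ e ⟨J'', hJ2⟩ = insert a (insert b (e ⟨I, hIJ⟩)) := by
      rw [hs1eq, hs2eq]
      ext x
      simp only [Finset.mem_union, Finset.mem_insert]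
      tauto
    rw [hueq, Finset.card_insert_of_notMem (by
        simp only [Finset.mem_insert]
        rintro (h | h); exact hab h; exact haI h),
      Finset.card_insert_of_notMem hbI]
  have hrkK : rk (e.symm (e ⟨J', hJ1⟩ ∪ e ⟨J'', hJ2⟩)).1 = rk I + 2 := by
    have h := rank_eq_card' hS J e (e.symm (e ⟨J', hJ1⟩ ∪ e ⟨J'', hJ2⟩))
    rw [e.apply_symm_apply] at h
    omega
  refine ⟨(e.symm (e ⟨J', hJ1⟩ ∪ e ⟨J'', hJ2⟩)).1, ?_, ?_,
    (e.symm (e ⟨J', hJ1⟩ ∪ e ⟨J'', hJ2⟩)).2, hrkK⟩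
  · have h' : (⟨J', hJ1⟩ : {X : S // X ≤ J}) < e.symm (e ⟨J', hJ1⟩ ∪ e ⟨J'', hJ2⟩) := by
      rw [← e.lt_iff_lt, e.apply_symm_apply]
      refine Finset.ssubset_iff_subset_ne.mpr ⟨Finset.subset_union_left, ?_⟩
      intro h
      have : (e ⟨J', hJ1⟩).card = (e ⟨I, hIJ⟩).card + 2 := by rw [h, hucard]
      omega
    exact h'
  · have h' : (⟨J'', hJ2⟩ : {X : S // X ≤ J}) < e.symm (e ⟨J', hJ1⟩ ∪ e ⟨J'', hJ2⟩) := by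
      rw [← e.lt_iff_lt, e.apply_symm_apply]
      refine Finset.ssubset_iff_subset_ne.mpr ⟨Finset.subset_union_right, ?_⟩
      intro h
      have : (e ⟨J'', hJ2⟩).card = (e ⟨I, hIJ⟩).card + 2 := by rw [h, hucard]
      omega
    exact h'

end helpers

section main
set_option linter.unusedSectionVars false
variable {k : Type*} [CommRing k] {S : Type*} [Fintype S] [PartialOrder S] [OrderBot S]
  {rk : S → ℕ} (A : S → Type*) [∀ I, AddCommGroup (A I)] [∀ I, Module k (A I)]
  (ε : S → S → ℤ) (m : ∀ I J : S, A I →ₗ[k] A J)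

lemma comp_congr_heq {B C C' D : S} (h : C = C')
    {f : A B →ₗ[k] A C} {g : A B →ₗ[k] A C'} (hfg : HEq f g)
    (p : A D →ₗ[k] A B) : HEq (f.comp p) (g.comp p) := by
  subst h
  rw [heq_iff_eq] at hfg
  subst hfg
  rfl

lemma smul_comp_smul {B C D : S} (a b : ℤ) (f : A B →ₗ[k] A C) (g : A C →ₗ[k] A D) :
    (b • g).comp (a • f) = (b * a) • (g.comp f) := by
  ext x
  simp only [LinearMap.comp_apply, LinearMap.smul_apply, map_zsmul, smul_smul]
  rw [mul_comm]

lemma square_eq {I J' J'' K : S}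
    (hε : ε K J' * ε J' I + ε K J'' * ε J'' I = 0)
    (hm : (m J' K).comp (m I J') + (m J'' K).comp (m I J'') = 0) :
    ((ε K J' • m J' K).comp (ε J' I • m I J') : A I →ₗ[k] A K) =
      (ε K J'' • m J'' K).comp (ε J'' I • m I J'') := by
  have hm' : (m J' K).comp (m I J') = -((m J'' K).comp (m I J'')) :=
    eq_neg_of_add_eq_zero_left hm
  have hε' : ε K J' * ε J' I = -(ε K J'' * ε J'' I) :=
    eq_neg_of_add_eq_zero_left hε
  rw [smul_comp_smul, smul_comp_smul, hε', hm', neg_smul, smul_neg, neg_neg]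

lemma key (hS : IsSimplicialPoset S rk)
    (hsign2 : ∀ I J J' J'' : S, I < J → rk J = rk I + 2 → J' ≠ J'' →
      I < J' → J' < J → I < J'' → J'' < J →
      ε J J' * ε J' I + ε J J'' * ε J'' I = 0)
    (hsquare : ∀ I J' J'' J : S, J' ≠ J'' →
      I < J' → J' < J → I < J'' → J'' < J →
      rk J' = rk I + 1 → rk J = rk J' + 1 → rk J'' = rk I + 1 →
      (m J' J).comp (m I J') + (m J'' J).comp (m I J'') = 0) :
    ∀ (n : ℕ) (I : S) (c₁ c₂ : List S), c₁.length = n →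
      IsSatChain rk (I :: c₁) → IsSatChain rk (I :: c₂) →
      lastD c₁ I = lastD c₂ I →
      HEq (compAlong A ε m I c₁) (compAlong A ε m I c₂) := by
  intro n
  induction n using Nat.strong_induction_on with
  | _ n IH =>
  intro I c₁ c₂ hlen h₁ h₂ hlast
  -- c₂ has the same length as c₁
  have hlen₂ : c₂.length = n := by
    have g1 := rk_lastD c₁ I h₁
    have g2 := rk_lastD c₂ I h₂
    rw [hlast] at g1
    omega
  cases c₁ with
  | nil =>
    have h0 : c₂.length = 0 := by rw [hlen₂, ← hlen]; rfl
    rw [List.length_eq_zero_iff] at h0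
    subst h0
    rfl
  | cons J' t₁ =>
  cases c₂ with
  | nil =>
    exfalso
    rw [← hlen] at hlen₂
    simp at hlen₂
  | cons J'' t₂ =>
    simp only [IsSatChain, List.Chain', List.isChain_cons_cons] at h₁ h₂
    obtain ⟨⟨hIJ', hrJ'⟩, h₁'⟩ := h₁
    obtain ⟨⟨hIJ'', hrJ''⟩, h₂'⟩ := h₂
    have hlast' : lastD t₁ J' = lastD t₂ J'' := hlast
    have hn : t₁.length + 1 = n := by rw [← hlen]; rfl
    have hn₂ : t₂.length + 1 = n := by rw [← hlen₂]; rfl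
    by_cases hJe : J' = J''
    · subst hJe
      have hheq : HEq (compAlong A ε m J' t₁) (compAlong A ε m J' t₂) :=
        IH t₁.length (by omega) J' t₁ t₂ rfl h₁' h₂' hlast'
      exact comp_congr_heq A hlast' hheq ((ε J' I) • m I J')
    · -- different first steps: build the square and a chain from the join
      set J := lastD t₁ J' with hJdef
      have hJ'le : J' ≤ J := le_lastD t₁ J' h₁'
      have hJ''le : J'' ≤ J := by rw [hlast']; exact le_lastD t₂ J'' h₂'
      obtain ⟨e⟩ := hS J
      obtain ⟨K, hK1, hK2, hKle, hrkK⟩ :=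
        exists_join hS J e I J' J'' hJe hIJ' hrJ' hIJ'' hrJ'' hJ'le hJ''le
      have hrkJ : rk J = rk I + 1 + t₁.length := by
        have h := rk_lastD t₁ J' h₁'
        rw [← hJdef] at h
        omega
      have hrkKJ : rk K ≤ rk J := by
        have hA := rank_eq_card hS J e K hKle
        have hB := rank_eq_card hS J e J (le_refl J)
        have hC : (e ⟨K, hKle⟩).card ≤ (e ⟨J, le_refl J⟩).card := Finset.card_le_card
          (e.monotone (show (⟨K, hKle⟩ : {X : S // X ≤ J}) ≤ ⟨J, le_refl J⟩ from hKle))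
        omega
      obtain ⟨d, hd1, hd2⟩ :=
        exists_satChain hS J e (t₁.length - 1) K hKle (by omega)
      have hch1 : IsSatChain rk (J' :: K :: d) := by
        simp only [IsSatChain, List.Chain', List.isChain_cons_cons] at hd1 ⊢
        exact ⟨⟨hK1, by omega⟩, hd1⟩
      have hch2 : IsSatChain rk (J'' :: K :: d) := by
        simp only [IsSatChain, List.Chain', List.isChain_cons_cons] at hd1 ⊢
        exact ⟨⟨hK2, by omega⟩, hd1⟩
      have hlast2 : lastD t₂ J'' = lastD d K := by rw [← hlast']; exact hd2.symm
      have heqA : HEq (compAlong A ε m J' t₁) (compAlong A ε m J' (K :: d)) :=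
        IH t₁.length (by omega) J' t₁ (K :: d) rfl h₁' hch1
          (show lastD t₁ J' = lastD d K from hd2.symm)
      have heqB : HEq (compAlong A ε m J'' (K :: d)) (compAlong A ε m J'' t₂) :=
        (IH t₂.length (by omega) J'' t₂ (K :: d) rfl h₂' hch2 hlast2).symm
      have heq1 : HEq ((compAlong A ε m J' t₁).comp ((ε J' I) • m I J'))
          ((compAlong A ε m J' (K :: d)).comp ((ε J' I) • m I J')) :=
        comp_congr_heq A (show lastD t₁ J' = lastD d K from hd2.symm) heqA _
      have heq5 : HEq ((compAlong A ε m J'' (K :: d)).comp ((ε J'' I) • m I J''))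
          ((compAlong A ε m J'' t₂).comp ((ε J'' I) • m I J'')) :=
        comp_congr_heq A (show lastD d K = lastD t₂ J'' from hlast2.symm) heqB _
      have e3 : ((ε K J' • m J' K).comp (ε J' I • m I J') : A I →ₗ[k] A K) =
          (ε K J'' • m J'' K).comp (ε J'' I • m I J'') :=
        square_eq A ε m
          (hsign2 I K J' J'' (hIJ'.trans hK1) hrkK hJe hIJ' hK1 hIJ'' hK2)
          (hsquare I J' J'' K hJe hIJ' hK1 hIJ'' hK2 hrJ' (by omega) hrJ'')
      have E : (compAlong A ε m J' (K :: d)).comp ((ε J' I) • m I J')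
          = (compAlong A ε m J'' (K :: d)).comp ((ε J'' I) • m I J'') := by
        show ((compAlong A ε m K d).comp ((ε K J') • m J' K)).comp ((ε J' I) • m I J')
          = ((compAlong A ε m K d).comp ((ε K J'') • m J'' K)).comp ((ε J'' I) • m I J'')
        rw [LinearMap.comp_assoc, LinearMap.comp_assoc, e3]
      exact (heq1.trans (heq_of_eq E)).trans heq5
end main

/-- given maps `m_{I,J}` on covering pairs whose total first differential
squares to zero (i.e. `m_{J',J} ∘ m_{I,J'} + m_{J'',J} ∘ m_{I,J''} = 0` on every square),
and a sign convention `ε`, the composite of the signed maps `[J:I] • m_{I,J}` along a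
saturated chain from `I` to `J` does not depend on the choice of the chain; hence these
composites define a cellular sheaf on `S`. -/
theorem compAlong_independent_of_chain {k : Type*} [CommRing k]
    {S : Type*} [Fintype S] [PartialOrder S] [OrderBot S]
    (rk : S → ℕ) (hS : IsSimplicialPoset S rk)
    (A : S → Type*) [∀ I, AddCommGroup (A I)] [∀ I, Module k (A I)]
    (ε : S → S → ℤ)
    (hsign1 : ∀ I J : S, I < J → rk J = rk I + 1 → ε J I = 1 ∨ ε J I = -1)
    (hsign2 : ∀ I J J' J'' : S, I < J → rk J = rk I + 2 → J' ≠ J'' →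
      I < J' → J' < J → I < J'' → J'' < J →
      ε J J' * ε J' I + ε J J'' * ε J'' I = 0)
    (m : ∀ I J : S, A I →ₗ[k] A J)
    (hsquare : ∀ I J' J'' J : S, J' ≠ J'' →
      I < J' → J' < J → I < J'' → J'' < J →
      rk J' = rk I + 1 → rk J = rk J' + 1 → rk J'' = rk I + 1 →
      (m J' J).comp (m I J') + (m J'' J).comp (m I J'') = 0)
    (I J : S) (c₁ c₂ : List S)
    (h₁ : IsSatChain rk (I :: c₁)) (h₂ : IsSatChain rk (I :: c₂))
    (e₁ : lastD c₁ I = J) (e₂ : lastD c₂ I = J) :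
    (e₁ ▸ compAlong A ε m I c₁ : A I →ₗ[k] A J) = e₂ ▸ compAlong A ε m I c₂ := by
  subst e₁
  have h := key A ε m hS hsign2 hsquare c₁.length I c₁ c₂ rfl h₁ h₂ e₂.symm
  symm
  rw [eqRec_eq_cast, cast_eq_iff_heq]
  exact h.symm
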